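/- (LH++ model, conditional-independence representation) The loss exceedance probability admits the integral representation P(L > α) = ∑_{k=0}^n C(n,k) · ∫_{−∞}^{A(α,k)} Φ((c_0 − √ρ_0·v)/√(1−ρ_0))^k · (1 − Φ((c_0 − √ρ_0·v)/√(1−ρ_0)))^{n−k} · φ(v) dv, where φ is the standard normal density and C(n,k) the binomial coefficient. -/

import Mathlib

open MeasureTheory ProbabilityTheory

/-- The standard normal cumulative distribution function `Φ`. -/
noncomputable def Phi (x : ℝ) : ℝ := (gaussianReal 0 1 (Set.Iic x)).toReal

/-- The inverse of the standard normal cdf. -/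
noncomputable def PhiInv : ℝ → ℝ := Function.invFun Phi

/-- The threshold `A(α,k)` of the LH++ model, in the extended reals, with the conventions
`Φ⁻¹(0) = −∞` (so `A = +∞` and the integral below is over all of `ℝ`) and `Φ⁻¹(1) = +∞`
(so `A = −∞` and the integral is `0`). -/
noncomputable def Athr (c ρ N R N0 R0 α : ℝ) (k : ℕ) : EReal :=
  if max 0 (min 1 ((α - k * N0 * (1 - R0)) / (N * (1 - R)))) ≤ 0 then ⊤
  else if 1 ≤ max 0 (min 1 ((α - k * N0 * (1 - R0)) / (N * (1 - R)))) then ⊥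
  else ((c - Real.sqrt (1 - ρ) *
      PhiInv (max 0 (min 1 ((α - k * N0 * (1 - R0)) / (N * (1 - R)))))) / Real.sqrt ρ : ℝ)

open Set
open scoped ENNReal NNReal Real
lemma Phi_eq_integral (x : ℝ) : Phi x = ∫ t in Set.Iic x, gaussianPDFReal 0 1 t := by
  rw [Phi, gaussianReal_apply_eq_integral 0 one_ne_zero,
    ENNReal.toReal_ofReal (setIntegral_nonneg measurableSet_Iic
      (fun t _ => gaussianPDFReal_nonneg 0 1 t))]

lemma gaussianReal_Iic (x : ℝ) : gaussianReal 0 1 (Set.Iic x) = ENNReal.ofReal (Phi x) := by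
  rw [Phi, ENNReal.ofReal_toReal (measure_ne_top _ _)]

lemma Phi_sub_eq (x y : ℝ) (h : x ≤ y) :
    Phi y - Phi x = ∫ t in Set.Ioc x y, gaussianPDFReal 0 1 t := by
  rw [Phi_eq_integral, Phi_eq_integral]
  rw [intervalIntegral.integral_Iic_sub_Iic ((integrable_gaussianPDFReal 0 1).restrict)
    ((integrable_gaussianPDFReal 0 1).restrict), intervalIntegral.integral_of_le h]

lemma Phi_strictMono : StrictMono Phi := by
  intro x y hxy
  have h : Phi y - Phi x = ∫ t in Set.Ioc x y, gaussianPDFReal 0 1 t := Phi_sub_eq x y hxy.le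
  have hpos : 0 < ∫ t in Set.Ioc x y, gaussianPDFReal 0 1 t := by
    rw [setIntegral_pos_iff_support_of_nonneg_ae
      (Filter.Eventually.of_forall (fun t => gaussianPDFReal_nonneg 0 1 t))
      ((integrable_gaussianPDFReal 0 1).restrict)]
    have : Function.support (gaussianPDFReal 0 1) = Set.univ := by
      ext t; simp [Function.mem_support, (gaussianPDFReal_pos 0 1 t one_ne_zero).ne']
    rw [this, Set.univ_inter, Real.volume_Ioc]
    simp [hxy]
  linarith

lemma Phi_mono : Monotone Phi := Phi_strictMono.monotone

lemma measurable_Phi : Measurable Phi := Phi_mono.measurable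

lemma gaussianPDFReal_le_one (t : ℝ) : gaussianPDFReal 0 1 t ≤ 1 := by
  rw [gaussianPDFReal]
  have h1 : (1 : ℝ) ≤ Real.sqrt (2 * Real.pi * 1) := by
    rw [show (2 : ℝ) * Real.pi * 1 = 2 * Real.pi by ring]
    rw [show (1:ℝ) = Real.sqrt 1 by simp]
    apply Real.sqrt_le_sqrt
    nlinarith [Real.pi_gt_three]
  have h2 : Real.exp (-(t - 0) ^ 2 / (2 * (1:ℝ≥0))) ≤ 1 := by
    rw [Real.exp_le_one_iff]
    have : (0:ℝ) ≤ (t - 0)^2 := sq_nonneg _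
    have : ((1:ℝ≥0):ℝ) = 1 := rfl
    rw [this]
    nlinarith
  calc (Real.sqrt (2 * Real.pi * 1))⁻¹ * Real.exp (-(t - 0) ^ 2 / (2 * (1:ℝ≥0)))
      ≤ 1 * 1 := by
        apply mul_le_mul _ h2 (Real.exp_nonneg _) zero_le_one
        rw [inv_le_one_iff₀]; right; exact h1
    _ = 1 := by ring

lemma Phi_lipschitz (x y : ℝ) (h : x ≤ y) : Phi y - Phi x ≤ y - x := by
  rw [Phi_sub_eq x y h]
  calc ∫ t in Set.Ioc x y, gaussianPDFReal 0 1 t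
      ≤ ∫ _t in Set.Ioc x y, (1:ℝ) := by
        apply setIntegral_mono_on ((integrable_gaussianPDFReal 0 1).restrict)
          (integrableOn_const (by rw [Real.volume_Ioc]; exact ENNReal.ofReal_ne_top))
          measurableSet_Ioc
        intro t _
        exact gaussianPDFReal_le_one t
    _ = y - x := by
        rw [setIntegral_const, Measure.real, Real.volume_Ioc, smul_eq_mul, mul_one,
          ENNReal.toReal_ofReal_eq_iff.2]
        · rcases le_or_gt x y with h'|h'
          · exact sub_nonneg.2 h'
          · exact absurd h (not_le.2 h')

lemma continuous_Phi : Continuous Phi := by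
  have : LipschitzWith 1 Phi := by
    apply LipschitzWith.of_dist_le_mul
    intro x y
    rw [Real.dist_eq, Real.dist_eq, NNReal.coe_one, one_mul]
    rcases le_total x y with h|h
    · rw [abs_sub_comm, abs_of_nonneg (sub_nonneg.2 (Phi_mono h)), abs_sub_comm,
        abs_of_nonneg (sub_nonneg.2 h)]
      exact Phi_lipschitz x y h
    · rw [abs_of_nonneg (sub_nonneg.2 (Phi_mono h)), abs_of_nonneg (sub_nonneg.2 h)]
      exact Phi_lipschitz y x h
  exact this.continuous

lemma Phi_pos (x : ℝ) : 0 < Phi x := by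
  rw [Phi_eq_integral]
  rw [setIntegral_pos_iff_support_of_nonneg_ae
    (Filter.Eventually.of_forall (fun t => gaussianPDFReal_nonneg 0 1 t))
    ((integrable_gaussianPDFReal 0 1).restrict)]
  have : Function.support (gaussianPDFReal 0 1) = Set.univ := by
    ext t; simp [Function.mem_support, (gaussianPDFReal_pos 0 1 t one_ne_zero).ne']
  rw [this, Set.univ_inter, Real.volume_Iic]
  simp

lemma Phi_lt_one (x : ℝ) : Phi x < 1 := by
  have h1 : Phi x < Phi (x + 1) := Phi_strictMono (by linarith)
  have h2 : Phi (x + 1) ≤ 1 := by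
    rw [Phi]
    have := prob_le_one (μ := gaussianReal 0 1) (s := Set.Iic (x+1))
    exact ENNReal.toReal_le_of_le_ofReal zero_le_one (by simpa using this)
  linarith

lemma Phi_nonneg (x : ℝ) : 0 ≤ Phi x := (Phi_pos x).le

lemma Phi_le_one (x : ℝ) : Phi x ≤ 1 := (Phi_lt_one x).le

lemma Phi_tendsto_atTop : Filter.Tendsto Phi Filter.atTop (nhds 1) := by
  have h := tendsto_measure_Iic_atTop (gaussianReal 0 1)
  rw [measure_univ] at h
  have := (ENNReal.tendsto_toReal (by norm_num : (1:ℝ≥0∞) ≠ ⊤)).comp h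
  exact (by simpa using this : Filter.Tendsto (ENNReal.toReal ∘ fun x => (gaussianReal 0 1) (Iic x)) Filter.atTop (nhds 1))

lemma Phi_tendsto_atBot : Filter.Tendsto Phi Filter.atBot (nhds 0) := by
  have hac : gaussianReal 0 1 ≪ (volume : Measure ℝ) :=
    gaussianReal_absolutelyContinuous 0 one_ne_zero
  have hIoi : ∀ x : ℝ, gaussianReal 0 1 (Set.Ici x) = gaussianReal 0 1 (Set.Ioi x) := by
    intro x
    refine measure_congr ?_
    exact (Ioi_ae_eq_Ici' (hac Real.volume_singleton)).symm
  have hcompl : ∀ x : ℝ, Phi x = 1 - (gaussianReal 0 1 (Set.Ici x)).toReal := by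
    intro x
    rw [hIoi, Phi]
    have : Set.Ioi x = (Set.Iic x)ᶜ := by simp
    rw [this, measure_compl measurableSet_Iic (measure_ne_top _ _), measure_univ,
      ENNReal.toReal_sub_of_le (prob_le_one) (by norm_num)]
    simp
  have h := tendsto_measure_Ici_atBot (gaussianReal 0 1)
  rw [measure_univ] at h
  have h2 := (ENNReal.tendsto_toReal (by norm_num : (1:ℝ≥0∞) ≠ ⊤)).comp h
  simp only [ENNReal.toReal_one] at h2
  have : Filter.Tendsto (fun x => 1 - (gaussianReal 0 1 (Set.Ici x)).toReal)
      Filter.atBot (nhds (1 - 1)) := Filter.Tendsto.const_sub _ h2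
  simp only [sub_self] at this
  exact this.congr (fun x => (hcompl x).symm)

lemma Phi_surj_Ioo {β : ℝ} (h0 : 0 < β) (h1 : β < 1) : ∃ x, Phi x = β := by
  have hb : ∀ᶠ x in Filter.atTop, β < Phi x :=
    Phi_tendsto_atTop.eventually (eventually_gt_nhds h1)
  have ha : ∀ᶠ x in Filter.atBot, Phi x < β :=
    Phi_tendsto_atBot.eventually (eventually_lt_nhds h0)
  obtain ⟨b, hbb⟩ := hb.exists
  obtain ⟨a, haa⟩ := ha.exists
  have hab : a ≤ b := by
    by_contra hcon
    push_neg at hcon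
    have := Phi_strictMono hcon
    linarith
  have := intermediate_value_Icc hab continuous_Phi.continuousOn
  have hmem : β ∈ Set.Icc (Phi a) (Phi b) := ⟨haa.le, hbb.le⟩
  obtain ⟨x, _, hx⟩ := this hmem
  exact ⟨x, hx⟩

lemma Phi_PhiInv {β : ℝ} (h0 : 0 < β) (h1 : β < 1) : Phi (PhiInv β) = β :=
  Function.invFun_eq (Phi_surj_Ioo h0 h1)

theorem map_tuple_pi {Ω : Type*} [MeasureSpace Ω] [IsProbabilityMeasure (ℙ : Measure Ω)]
    (n : ℕ) (V : Ω → ℝ) (ξ : Fin n → Ω → ℝ)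
    (hV : Measurable V) (hξ : ∀ i, Measurable (ξ i))
    (hVlaw : Measure.map V ℙ = gaussianReal 0 1)
    (hξlaw : ∀ i, Measure.map (ξ i) ℙ = gaussianReal 0 1)
    (hindep : iIndepFun (m := fun _ => (inferInstance : MeasurableSpace ℝ))
      (fun o : Option (Fin n) => o.elim V fun i => ξ i) ℙ) :
    Measure.map (fun ω => (V ω, fun i => ξ i ω)) ℙ
      = (gaussianReal 0 1).prod (Measure.pi fun _ : Fin n => gaussianReal 0 1) := by
  classical
  set μg := gaussianReal 0 1 with hμg
  have htuplemeas : Measurable (fun ω => (fun i => ξ i ω : Fin n → ℝ)) :=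
    measurable_pi_lambda _ (fun i => hξ i)
  -- law of the ξ tuple
  have htuple : Measure.map (fun ω => (fun i => ξ i ω : Fin n → ℝ)) ℙ
      = Measure.pi (fun _ : Fin n => μg) := by
    refine (Measure.pi_eq fun s hs => ?_).symm
    rw [Measure.map_apply htuplemeas (MeasurableSet.univ_pi hs)]
    have hpre : (fun ω => (fun i => ξ i ω : Fin n → ℝ)) ⁻¹' (Set.pi Set.univ s)
        = ⋂ i, ξ i ⁻¹' s i := by
      ext ω; simp [Set.mem_pi]
    rw [hpre]
    have hiInter : (⋂ i, ξ i ⁻¹' s i)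
        = ⋂ o ∈ (Finset.univ.map ⟨some, Option.some_injective _⟩ :
            Finset (Option (Fin n))),
          (o.elim V fun i => ξ i) ⁻¹' (o.elim Set.univ s) := by
      ext ω
      simp only [Set.mem_iInter, Finset.mem_map, Finset.mem_univ, Function.Embedding.coeFn_mk,
        true_and, Set.mem_preimage]
      constructor
      · rintro h o ⟨i, rfl⟩
        exact h i
      · intro h i
        exact h (some i) ⟨i, rfl⟩
    rw [hiInter, hindep.meas_biInter (fun o ho => ?_)]
    · rw [Finset.prod_map]
      refine Finset.prod_congr rfl (fun i _ => ?_)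
      have h3 := Measure.map_apply (μ := (ℙ : Measure Ω)) (hξ i) (hs i)
      rw [hξlaw i] at h3
      exact h3.symm
    · exact ⟨o.elim Set.univ s, by cases o <;> simp [hs _], rfl⟩
  -- independence of V and the tuple
  have hVtuple : IndepFun V (fun ω => (fun i => ξ i ω : Fin n → ℝ)) ℙ := by
    have hmeas : ∀ o : Option (Fin n), Measurable (o.elim V fun i => ξ i) := by
      intro o; cases o
      · exact hV
      · exact hξ _
    have hdisj : Disjoint ({none} : Finset (Option (Fin n)))
        (Finset.univ.map ⟨some, Option.some_injective _⟩) := by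
      simp [Finset.disjoint_left]
    have h := hindep.indepFun_finset {none}
      (Finset.univ.map ⟨some, Option.some_injective _⟩) hdisj hmeas
    have h2 := h.comp
      (φ := fun g : ({none} : Finset (Option (Fin n))) → ℝ =>
        g ⟨none, Finset.mem_singleton_self none⟩)
      (ψ := fun g : (Finset.univ.map ⟨some, Option.some_injective _⟩ :
          Finset (Option (Fin n))) → ℝ =>
        (fun i : Fin n => g ⟨some i, by simp⟩))
      (measurable_pi_apply _ : Measurable (fun g : ({none} : Finset (Option (Fin n))) → ℝ =>
        g ⟨none, Finset.mem_singleton_self none⟩))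
      (measurable_pi_lambda _ (fun i => measurable_pi_apply _))
    exact h2
  -- combine
  refine (Measure.prod_eq fun s t hs ht => ?_).symm
  rw [Measure.map_apply (hV.prodMk htuplemeas) (hs.prod ht)]
  have hpre : (fun ω => (V ω, fun i => ξ i ω)) ⁻¹' (s ×ˢ t)
      = V ⁻¹' s ∩ (fun ω => (fun i => ξ i ω : Fin n → ℝ)) ⁻¹' t := by
    ext ω; simp [Set.mem_prod]
  rw [hpre, hVtuple.meas_inter ⟨s, hs, rfl⟩ ⟨t, ht, rfl⟩,
    ← Measure.map_apply hV hs, ← Measure.map_apply htuplemeas ht, hVlaw, htuple]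


lemma gaussianReal_Ioi (a : ℝ) :
    gaussianReal 0 1 (Set.Ioi a) = ENNReal.ofReal (1 - Phi a) := by
  have h : Set.Ioi a = (Set.Iic a)ᶜ := by simp
  rw [h, measure_compl measurableSet_Iic (measure_ne_top _ _), measure_univ, gaussianReal_Iic,
    ENNReal.ofReal_sub _ (Phi_nonneg a), ENNReal.ofReal_one]

lemma mem_box {n : ℕ} (a : ℝ) (S : Finset (Fin n)) (x : Fin n → ℝ) :
    x ∈ Set.pi Set.univ (fun i => if i ∈ S then Set.Iic a else Set.Ioi a)
      ↔ (Finset.univ.filter fun i => x i ≤ a) = S := by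
  classical
  simp only [Set.mem_pi, Set.mem_univ, true_implies]
  constructor
  · intro h
    ext i
    simp only [Finset.mem_filter, Finset.mem_univ, true_and]
    by_cases hi : i ∈ S
    · have := h i; rw [if_pos hi] at this
      exact ⟨fun _ => hi, fun _ => this⟩
    · have := h i; rw [if_neg hi] at this
      exact ⟨fun hx => absurd hx (not_le.2 this), fun h' => absurd h' hi⟩
  · intro h i
    by_cases hi : i ∈ S
    · rw [if_pos hi]
      rw [← h] at hi
      simpa using (Finset.mem_filter.1 hi).2
    · rw [if_neg hi]
      rw [← h] at hi
      simp only [Finset.mem_filter, Finset.mem_univ, true_and] at hi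
      exact lt_of_not_ge hi
  
lemma cnt_decomp {n : ℕ} (a : ℝ) (k : ℕ) :
    {x : Fin n → ℝ | (Finset.univ.filter fun i => x i ≤ a).card = k}
      = ⋃ S ∈ Finset.powersetCard k (Finset.univ : Finset (Fin n)),
          Set.pi Set.univ (fun i => if i ∈ S then Set.Iic a else Set.Ioi a) := by
  classical
  ext x
  simp only [Set.mem_setOf_eq, Set.mem_iUnion, Finset.mem_powersetCard]
  constructor
  · intro h
    exact ⟨Finset.univ.filter fun i => x i ≤ a, ⟨Finset.subset_univ _, h⟩,
      (mem_box a _ x).2 rfl⟩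
  · rintro ⟨S, ⟨-, hcard⟩, hmem⟩
    rw [(mem_box a S x).1 hmem, hcard]

lemma measurable_box {n : ℕ} (a : ℝ) (S : Finset (Fin n)) :
    MeasurableSet (Set.pi Set.univ (fun i => if i ∈ S then Set.Iic a else Set.Ioi a)) := by
  refine MeasurableSet.univ_pi (fun i => ?_)
  split
  · exact measurableSet_Iic
  · exact measurableSet_Ioi

lemma measurable_cnt_set {n : ℕ} (a : ℝ) (k : ℕ) :
    MeasurableSet {x : Fin n → ℝ | (Finset.univ.filter fun i => x i ≤ a).card = k} := by
  classical
  rw [cnt_decomp]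
  exact Finset.measurableSet_biUnion _ (fun S _ => measurable_box a S)

lemma measure_cnt (n : ℕ) (a : ℝ) (k : ℕ) :
    Measure.pi (fun _ : Fin n => gaussianReal 0 1)
      {x : Fin n → ℝ | (Finset.univ.filter fun i => x i ≤ a).card = k}
      = (n.choose k : ℝ≥0∞) * ENNReal.ofReal (Phi a ^ k * (1 - Phi a) ^ (n - k)) := by
  classical
  rw [cnt_decomp]
  rw [measure_biUnion_finset ?hd (fun S _ => measurable_box a S)]
  case hd =>
    intro S hS T hT hST
    refine Set.disjoint_left.2 (fun x hxS hxT => ?_)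
    exact hST (((mem_box a S x).1 hxS).symm.trans ((mem_box a T x).1 hxT))
  have hbox : ∀ S ∈ Finset.powersetCard k (Finset.univ : Finset (Fin n)),
      Measure.pi (fun _ : Fin n => gaussianReal 0 1)
          (Set.pi Set.univ fun i => if i ∈ S then Set.Iic a else Set.Ioi a)
        = ENNReal.ofReal (Phi a ^ k * (1 - Phi a) ^ (n - k)) := by
    intro S hS
    rw [Finset.mem_powersetCard] at hS
    rw [Measure.pi_pi]
    have h1 : ∀ i : Fin n, (gaussianReal 0 1) (if i ∈ S then Set.Iic a else Set.Ioi a)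
        = if i ∈ S then ENNReal.ofReal (Phi a) else ENNReal.ofReal (1 - Phi a) := by
      intro i; split
      · exact gaussianReal_Iic a
      · exact gaussianReal_Ioi a
    rw [Finset.prod_congr rfl (fun i _ => h1 i), ← Finset.prod_mul_prod_compl S,
      Finset.prod_congr rfl (fun i hi => if_pos hi),
      Finset.prod_congr rfl (fun i hi => if_neg (Finset.mem_compl.1 hi)),
      Finset.prod_const, Finset.prod_const, Finset.card_compl, Fintype.card_fin, hS.2,
      ← ENNReal.ofReal_pow (Phi_nonneg a),
      ← ENNReal.ofReal_pow (by linarith [Phi_le_one a] : (0:ℝ) ≤ 1 - Phi a),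
      ← ENNReal.ofReal_mul (pow_nonneg (Phi_nonneg a) _)]
  rw [Finset.sum_congr rfl hbox, Finset.sum_const, Finset.card_powersetCard, Finset.card_univ,
    Fintype.card_fin, nsmul_eq_mul]
lemma target_cases (c ρ N R N0 R0 α : ℝ) (k : ℕ) :
    {v : ℝ | (v : EReal) ≤ Athr c ρ N R N0 R0 α k}
      = if (α - k * N0 * (1 - R0)) / (N * (1 - R)) ≤ 0 then Set.univ
        else if 1 ≤ (α - k * N0 * (1 - R0)) / (N * (1 - R)) then (∅ : Set ℝ)
        else Set.Iic ((c - Real.sqrt (1 - ρ) *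
          PhiInv ((α - k * N0 * (1 - R0)) / (N * (1 - R)))) / Real.sqrt ρ) := by
  set t := (α - k * N0 * (1 - R0)) / (N * (1 - R)) with ht
  rw [Athr]
  by_cases h0 : t ≤ 0
  · rw [if_pos (by rw [← ht]; simp [max_le_iff, min_le_iff, h0]), if_pos h0]
    ext v; simp [le_top]
  · have h0' : ¬ (max 0 (min 1 t) ≤ 0) := by
      push_neg at h0 ⊢
      exact lt_max_of_lt_right (lt_min one_pos h0)
    rw [if_neg (by rw [← ht]; exact h0'), if_neg h0]
    by_cases h1 : 1 ≤ t
    · rw [if_pos (by rw [← ht, min_eq_left h1]; simp), if_pos h1]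
      ext v
      simp only [Set.mem_setOf_eq, Set.mem_empty_iff_false, iff_false, le_bot_iff]
      exact EReal.coe_ne_bot v
    · have hmax : max 0 (min 1 t) = t := by
        push_neg at h0 h1
        rw [min_eq_right h1.le, max_eq_right h0.le]
      rw [if_neg (by rw [← ht, hmax]; exact h1), if_neg h1]
      ext v
      simp only [Set.mem_setOf_eq, Set.mem_Iic, ← ht, hmax]
      exact EReal.coe_le_coe_iff

lemma cond_cases (c ρ N R N0 R0 α : ℝ) (k : ℕ) (hρ0 : 0 < ρ) (hρ1 : ρ < 1) :
    {u : ℝ | (α - k * N0 * (1 - R0)) / (N * (1 - R)) < Phi ((c - Real.sqrt ρ * u) / Real.sqrt (1 - ρ))}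
      = if (α - k * N0 * (1 - R0)) / (N * (1 - R)) ≤ 0 then Set.univ
        else if 1 ≤ (α - k * N0 * (1 - R0)) / (N * (1 - R)) then (∅ : Set ℝ)
        else Set.Iio ((c - Real.sqrt (1 - ρ) *
          PhiInv ((α - k * N0 * (1 - R0)) / (N * (1 - R)))) / Real.sqrt ρ) := by
  have hsρ : 0 < Real.sqrt ρ := Real.sqrt_pos.2 hρ0
  have hs1ρ : 0 < Real.sqrt (1 - ρ) := Real.sqrt_pos.2 (by linarith)
  set t := (α - k * N0 * (1 - R0)) / (N * (1 - R)) with ht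
  by_cases h0 : t ≤ 0
  · rw [if_pos h0]
    ext u
    simp only [Set.mem_setOf_eq, Set.mem_univ, iff_true, ← ht]
    exact lt_of_le_of_lt h0 (Phi_pos _)
  · rw [if_neg h0]
    push_neg at h0
    by_cases h1 : 1 ≤ t
    · rw [if_pos h1]
      ext u
      simp only [Set.mem_setOf_eq, Set.mem_empty_iff_false, iff_false, not_lt, ← ht]
      exact le_trans (Phi_lt_one _).le h1
    · rw [if_neg h1]
      push_neg at h1
      ext u
      simp only [Set.mem_setOf_eq, Set.mem_Iio, ← ht]
      rw [lt_div_iff₀ hsρ]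
      conv_lhs => rw [show t = Phi (PhiInv t) from (Phi_PhiInv h0 h1).symm]
      rw [Phi_strictMono.lt_iff_lt, lt_div_iff₀ hs1ρ]
      constructor <;> intro h <;>
        nlinarith [mul_comm (PhiInv t) (Real.sqrt (1 - ρ)), mul_comm u (Real.sqrt ρ)]

lemma target_measurable (c ρ N R N0 R0 α : ℝ) (k : ℕ) :
    MeasurableSet {v : ℝ | (v : EReal) ≤ Athr c ρ N R N0 R0 α k} := by
  rw [target_cases]
  split
  · exact MeasurableSet.univ
  · split
    · exact MeasurableSet.empty
    · exact measurableSet_Iic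

lemma cond_ae_eq_target (c ρ N R N0 R0 α : ℝ) (k : ℕ) (hρ0 : 0 < ρ) (hρ1 : ρ < 1) :
    {u : ℝ | (α - k * N0 * (1 - R0)) / (N * (1 - R))
        < Phi ((c - Real.sqrt ρ * u) / Real.sqrt (1 - ρ))}
      =ᵐ[gaussianReal 0 1] {v : ℝ | (v : EReal) ≤ Athr c ρ N R N0 R0 α k} := by
  rw [cond_cases c ρ N R N0 R0 α k hρ0 hρ1, target_cases]
  split
  · rfl
  · split
    · rfl
    · exact Iio_ae_eq_Iic' ((gaussianReal_absolutelyContinuous 0 one_ne_zero)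
        Real.volume_singleton)
lemma lintegral_ofReal_gaussian (w : Set ℝ) (hw : MeasurableSet w) (f : ℝ → ℝ)
    (hf : Measurable f) (h0 : ∀ v, 0 ≤ f v) (h1 : ∀ v, f v ≤ 1) :
    ∫⁻ v in w, ENNReal.ofReal (f v) ∂(gaussianReal 0 1)
      = ENNReal.ofReal (∫ v in w, f v * gaussianPDFReal 0 1 v) := by
  have hint : Integrable (fun v => f v * gaussianPDFReal 0 1 v) (volume.restrict w) := by
    refine Integrable.mono ((integrable_gaussianPDFReal 0 1).restrict)
      ((hf.mul (measurable_gaussianPDFReal 0 1)).aestronglyMeasurable)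
      (Filter.Eventually.of_forall fun v => ?_)
    simp only [norm_mul, Real.norm_eq_abs]
    rw [abs_of_nonneg (h0 v), abs_of_nonneg (gaussianPDFReal_nonneg 0 1 v)]
    nlinarith [h1 v, h0 v, gaussianPDFReal_nonneg 0 1 v]
  rw [ofReal_integral_eq_lintegral_ofReal hint
    (Filter.Eventually.of_forall fun v => mul_nonneg (h0 v) (gaussianPDFReal_nonneg 0 1 v))]
  rw [gaussianReal_of_var_ne_zero 0 one_ne_zero, restrict_withDensity hw,
    lintegral_withDensity_eq_lintegral_mul _ (measurable_gaussianPDF 0 1) hf.ennreal_ofReal]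
  refine lintegral_congr fun v => ?_
  simp only [Pi.mul_apply, gaussianPDF]
  rw [← ENNReal.ofReal_mul (gaussianPDFReal_nonneg 0 1 v), mul_comm]

/-- The conditional loss function of the LH++ model given `V = p.1` and `ξ = p.2`. -/
noncomputable def lossFn (n : ℕ) (c0 ρ0 c ρ N R N0 R0 : ℝ) (p : ℝ × (Fin n → ℝ)) : ℝ :=
  (∑ i : Fin n, N0 * (1 - R0) *
      if p.2 i ≤ (c0 - Real.sqrt ρ0 * p.1) / Real.sqrt (1 - ρ0) then 1 else 0)
    + N * (1 - R) * Phi ((c - Real.sqrt ρ * p.1) / Real.sqrt (1 - ρ))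

lemma measurable_lossFn (n : ℕ) (c0 ρ0 c ρ N R N0 R0 : ℝ) :
    Measurable (lossFn n c0 ρ0 c ρ N R N0 R0) := by
  apply Measurable.add
  · apply Finset.measurable_sum
    intro i _
    apply Measurable.const_mul
    refine Measurable.ite ?_ measurable_const measurable_const
    exact measurableSet_le (by fun_prop) (by fun_prop)
  · exact (measurable_Phi.comp
      ((measurable_const.sub (measurable_fst.const_mul _)).div_const _)).const_mul _

lemma lossFn_eval (n : ℕ) (c0 ρ0 c ρ N R N0 R0 v : ℝ) (x : Fin n → ℝ) :
    lossFn n c0 ρ0 c ρ N R N0 R0 (v, x)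
      = N0 * (1 - R0) * ((Finset.univ.filter
            fun i => x i ≤ (c0 - Real.sqrt ρ0 * v) / Real.sqrt (1 - ρ0)).card : ℝ)
        + N * (1 - R) * Phi ((c - Real.sqrt ρ * v) / Real.sqrt (1 - ρ)) := by
  classical
  rw [lossFn]
  congr 1
  calc (∑ i : Fin n, N0 * (1 - R0) *
          if x i ≤ (c0 - Real.sqrt ρ0 * v) / Real.sqrt (1 - ρ0) then (1:ℝ) else 0)
      = ∑ i : Fin n,
          if x i ≤ (c0 - Real.sqrt ρ0 * v) / Real.sqrt (1 - ρ0) then N0 * (1 - R0) else 0 := by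
        refine Finset.sum_congr rfl fun i _ => ?_
        split <;> ring
    _ = ∑ _i ∈ (Finset.univ.filter
          fun i => x i ≤ (c0 - Real.sqrt ρ0 * v) / Real.sqrt (1 - ρ0)), (N0 * (1 - R0)) :=
        (Finset.sum_filter _ _).symm
    _ = _ := by rw [Finset.sum_const, nsmul_eq_mul, mul_comm]

lemma section_measure (n : ℕ) (c0 ρ0 c ρ N R N0 R0 α : ℝ)
    (hNr : 0 < N * (1 - R)) (v : ℝ) :
    Measure.pi (fun _ : Fin n => gaussianReal 0 1)
        (Prod.mk v ⁻¹' {p : ℝ × (Fin n → ℝ) | α < lossFn n c0 ρ0 c ρ N R N0 R0 p})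
      = ∑ k ∈ Finset.range (n + 1),
          Set.indicator {u : ℝ | (α - k * N0 * (1 - R0)) / (N * (1 - R))
              < Phi ((c - Real.sqrt ρ * u) / Real.sqrt (1 - ρ))}
            (fun u => (n.choose k : ℝ≥0∞) *
              ENNReal.ofReal (Phi ((c0 - Real.sqrt ρ0 * u) / Real.sqrt (1 - ρ0)) ^ k *
                (1 - Phi ((c0 - Real.sqrt ρ0 * u) / Real.sqrt (1 - ρ0))) ^ (n - k))) v := by
  classical
  set a := (c0 - Real.sqrt ρ0 * v) / Real.sqrt (1 - ρ0) with ha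
  set P := Phi ((c - Real.sqrt ρ * v) / Real.sqrt (1 - ρ)) with hP
  have hcond : ∀ m : ℕ, (α < N0 * (1 - R0) * (m : ℝ) + N * (1 - R) * P)
      ↔ ((α - m * N0 * (1 - R0)) / (N * (1 - R)) < P) := by
    intro m
    rw [div_lt_iff₀ hNr]
    constructor <;> intro h <;> nlinarith [h]
  have hsec : Prod.mk v ⁻¹' {p : ℝ × (Fin n → ℝ) | α < lossFn n c0 ρ0 c ρ N R N0 R0 p}
      = ⋃ k ∈ Finset.range (n + 1),
          ({x : Fin n → ℝ | (Finset.univ.filter fun i => x i ≤ a).card = k}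
            ∩ if (α - k * N0 * (1 - R0)) / (N * (1 - R)) < P then Set.univ else ∅) := by
    ext x
    simp only [Set.mem_preimage, Set.mem_setOf_eq, Set.mem_iUnion, Finset.mem_range,
      Set.mem_inter_iff]
    rw [lossFn_eval, ← ha, ← hP]
    constructor
    · intro hlt
      refine ⟨(Finset.univ.filter fun i => x i ≤ a).card,
        Nat.lt_succ_of_le (le_trans (Finset.card_filter_le _ _) (by simp)), rfl, ?_⟩
      rw [if_pos ((hcond _).1 hlt)]
      trivial
    · rintro ⟨k, _, hcnt, hmem⟩
      by_cases hc : (α - k * N0 * (1 - R0)) / (N * (1 - R)) < P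
      · rw [hcnt]
        exact (hcond k).2 hc
      · rw [if_neg hc] at hmem
        exact absurd hmem (Set.notMem_empty x)
  rw [hsec, measure_biUnion_finset ?hd ?hm]
  case hd =>
    intro k hk l hl hkl
    refine Set.disjoint_left.2 fun x hxk hxl => ?_
    exact hkl (hxk.1.symm.trans hxl.1)
  case hm =>
    intro k _
    refine (measurable_cnt_set a k).inter ?_
    split
    · exact MeasurableSet.univ
    · exact MeasurableSet.empty
  refine Finset.sum_congr rfl fun k hk => ?_
  by_cases hc : (α - k * N0 * (1 - R0)) / (N * (1 - R)) < P
  · rw [if_pos hc, Set.inter_univ,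
      measure_cnt n a k,
      Set.indicator_of_mem (by exact hc) _]
  · rw [if_neg hc, Set.inter_empty, measure_empty,
      Set.indicator_of_notMem (by exact hc) _]


/-- **LH++ model, conditional-independence representation.**
`P(L > α) = ∑_{k=0}^n C(n,k) · ∫_{−∞}^{A(α,k)} Φ((c₀ − √ρ₀·v)/√(1−ρ₀))^k ·
(1 − Φ((c₀ − √ρ₀·v)/√(1−ρ₀)))^{n−k} · φ(v) dv`. -/
theorem lhpp_loss_exceedance_prob_integral
    {Ω : Type*} [MeasureSpace Ω] [IsProbabilityMeasure (ℙ : Measure Ω)]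
    (n : ℕ) (V : Ω → ℝ) (ξ : Fin n → Ω → ℝ)
    (hV : Measurable V) (hξ : ∀ i, Measurable (ξ i))
    (hVlaw : Measure.map V ℙ = gaussianReal 0 1)
    (hξlaw : ∀ i, Measure.map (ξ i) ℙ = gaussianReal 0 1)
    (hindep : iIndepFun (m := fun _ => (inferInstance : MeasurableSpace ℝ))
      (fun o : Option (Fin n) => o.elim V fun i => ξ i) ℙ)
    (ρ ρ0 : ℝ) (hρ : ρ ∈ Set.Ioo (0 : ℝ) 1) (hρ0 : ρ0 ∈ Set.Ioo (0 : ℝ) 1)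
    (c c0 : ℝ) (R R0 : ℝ) (hR : R ∈ Set.Ico (0 : ℝ) 1) (hR0 : R0 ∈ Set.Ico (0 : ℝ) 1)
    (N N0 : ℝ) (hN : 0 < N) (hN0 : 0 < N0) (hsum : N + n * N0 = 1)
    (X : Fin n → Ω → ℝ)
    (hX : ∀ i, X i = fun ω => Real.sqrt ρ0 * V ω + Real.sqrt (1 - ρ0) * ξ i ω)
    (L : Ω → ℝ)
    (hL : L = fun ω =>
      (∑ i : Fin n, N0 * (1 - R0) * Set.indicator {ω' | X i ω' ≤ c0} (fun _ => (1 : ℝ)) ω)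
        + N * (1 - R) * Phi ((c - Real.sqrt ρ * V ω) / Real.sqrt (1 - ρ)))
    (α : ℝ) :
    (ℙ {ω | α < L ω}).toReal
      = ∑ k ∈ Finset.range (n + 1), (n.choose k : ℝ) *
          ∫ v in {v : ℝ | (v : EReal) ≤ Athr c ρ N R N0 R0 α k},
            Phi ((c0 - Real.sqrt ρ0 * v) / Real.sqrt (1 - ρ0)) ^ k
              * (1 - Phi ((c0 - Real.sqrt ρ0 * v) / Real.sqrt (1 - ρ0))) ^ (n - k)
              * gaussianPDFReal 0 1 v := by
  classical
  obtain ⟨hρa, hρb⟩ := hρ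
  obtain ⟨hρ0a, hρ0b⟩ := hρ0
  have hs1ρ0 : 0 < Real.sqrt (1 - ρ0) := Real.sqrt_pos.2 (by linarith)
  have hNr : 0 < N * (1 - R) := mul_pos hN (by linarith [hR.2])
  have hE : MeasurableSet {p : ℝ × (Fin n → ℝ) | α < lossFn n c0 ρ0 c ρ N R N0 R0 p} :=
    measurableSet_lt measurable_const (measurable_lossFn n c0 ρ0 c ρ N R N0 R0)
  have hTmeas : Measurable (fun ω => (V ω, fun i => ξ i ω)) :=
    hV.prodMk (measurable_pi_lambda _ hξ)
  have hsetEq : {ω | α < L ω}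
      = (fun ω => (V ω, fun i => ξ i ω)) ⁻¹'
          {p : ℝ × (Fin n → ℝ) | α < lossFn n c0 ρ0 c ρ N R N0 R0 p} := by
    ext ω
    simp only [Set.mem_setOf_eq, Set.mem_preimage, hL]
    have hbody : (∑ i : Fin n, N0 * (1 - R0) *
          Set.indicator {ω' | X i ω' ≤ c0} (fun _ => (1 : ℝ)) ω)
          + N * (1 - R) * Phi ((c - Real.sqrt ρ * V ω) / Real.sqrt (1 - ρ))
        = lossFn n c0 ρ0 c ρ N R N0 R0 (V ω, fun i => ξ i ω) := by
      rw [lossFn]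
      congr 1
      refine Finset.sum_congr rfl fun i _ => ?_
      congr 1
      rw [Set.indicator_apply]
      simp only [Set.mem_setOf_eq]
      have hiff : X i ω ≤ c0
          ↔ ξ i ω ≤ (c0 - Real.sqrt ρ0 * V ω) / Real.sqrt (1 - ρ0) := by
        rw [hX i]
        simp only
        rw [le_div_iff₀ hs1ρ0]
        constructor <;> intro h <;>
          nlinarith [mul_comm (ξ i ω) (Real.sqrt (1 - ρ0))]
      by_cases hc : X i ω ≤ c0
      · rw [if_pos hc, if_pos (hiff.1 hc)]
      · rw [if_neg hc, if_neg fun hcon => hc (hiff.2 hcon)]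
    rw [hbody]
  rw [hsetEq, ← Measure.map_apply hTmeas hE,
    map_tuple_pi n V ξ hV hξ hVlaw hξlaw hindep,
    Measure.prod_apply hE,
    lintegral_congr (section_measure n c0 ρ0 c ρ N R N0 R0 α hNr),
    lintegral_finset_sum _ ?hms]
  case hms =>
    intro k _
    refine Measurable.indicator ?_ ?_
    · refine Measurable.const_mul (Measurable.ennreal_ofReal ?_) _
      have hp : Measurable fun u : ℝ =>
          Phi ((c0 - Real.sqrt ρ0 * u) / Real.sqrt (1 - ρ0)) :=
        measurable_Phi.comp ((measurable_const.sub (measurable_id.const_mul _)).div_const _)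
      exact (hp.pow_const k).mul ((measurable_const.sub hp).pow_const (n - k))
    · exact measurableSet_lt measurable_const
        (measurable_Phi.comp ((measurable_const.sub (measurable_id.const_mul _)).div_const _))
  have hterm : ∀ k ∈ Finset.range (n + 1),
      (∫⁻ v, Set.indicator {u : ℝ | (α - k * N0 * (1 - R0)) / (N * (1 - R))
            < Phi ((c - Real.sqrt ρ * u) / Real.sqrt (1 - ρ))}
          (fun u => (n.choose k : ℝ≥0∞) *
            ENNReal.ofReal (Phi ((c0 - Real.sqrt ρ0 * u) / Real.sqrt (1 - ρ0)) ^ k *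
              (1 - Phi ((c0 - Real.sqrt ρ0 * u) / Real.sqrt (1 - ρ0))) ^ (n - k))) v
          ∂(gaussianReal 0 1))
        = (n.choose k : ℝ≥0∞) * ENNReal.ofReal
            (∫ v in {v : ℝ | (v : EReal) ≤ Athr c ρ N R N0 R0 α k},
              Phi ((c0 - Real.sqrt ρ0 * v) / Real.sqrt (1 - ρ0)) ^ k
                * (1 - Phi ((c0 - Real.sqrt ρ0 * v) / Real.sqrt (1 - ρ0))) ^ (n - k)
                * gaussianPDFReal 0 1 v) := by
    intro k _
    have hp : Measurable fun u : ℝ =>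
        Phi ((c0 - Real.sqrt ρ0 * u) / Real.sqrt (1 - ρ0)) :=
      measurable_Phi.comp ((measurable_const.sub (measurable_id.const_mul _)).div_const _)
    have hfmeas : Measurable fun u : ℝ =>
        Phi ((c0 - Real.sqrt ρ0 * u) / Real.sqrt (1 - ρ0)) ^ k *
          (1 - Phi ((c0 - Real.sqrt ρ0 * u) / Real.sqrt (1 - ρ0))) ^ (n - k) :=
      (hp.pow_const k).mul ((measurable_const.sub hp).pow_const (n - k))
    have hsk : MeasurableSet {u : ℝ | (α - k * N0 * (1 - R0)) / (N * (1 - R))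
        < Phi ((c - Real.sqrt ρ * u) / Real.sqrt (1 - ρ))} :=
      measurableSet_lt measurable_const
        (measurable_Phi.comp ((measurable_const.sub (measurable_id.const_mul _)).div_const _))
    rw [lintegral_indicator hsk]
    rw [setLIntegral_congr (cond_ae_eq_target c ρ N R N0 R0 α k hρa hρb)]
    rw [lintegral_const_mul _ hfmeas.ennreal_ofReal]
    rw [lintegral_ofReal_gaussian _ (target_measurable c ρ N R N0 R0 α k) _ hfmeas
      (fun v => mul_nonneg (pow_nonneg (Phi_nonneg _) _)
        (pow_nonneg (by linarith [Phi_le_one ((c0 - Real.sqrt ρ0 * v) / Real.sqrt (1 - ρ0))]) _))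
      (fun v => mul_le_one₀
        (pow_le_one₀ (Phi_nonneg _) (Phi_le_one _))
        (pow_nonneg (by linarith [Phi_le_one ((c0 - Real.sqrt ρ0 * v) / Real.sqrt (1 - ρ0))]) _)
        (pow_le_one₀ (by linarith [Phi_le_one ((c0 - Real.sqrt ρ0 * v) / Real.sqrt (1 - ρ0))])
          (by linarith [Phi_pos ((c0 - Real.sqrt ρ0 * v) / Real.sqrt (1 - ρ0))])))]
  rw [Finset.sum_congr rfl hterm,
    ENNReal.toReal_sum (fun k _ => ENNReal.mul_ne_top (ENNReal.natCast_ne_top _)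
      ENNReal.ofReal_ne_top)]
  refine Finset.sum_congr rfl fun k _ => ?_
  rw [ENNReal.toReal_mul, ENNReal.toReal_natCast, ENNReal.toReal_ofReal]
  refine setIntegral_nonneg (target_measurable c ρ N R N0 R0 α k) fun v _ => ?_
  refine mul_nonneg (mul_nonneg (pow_nonneg (Phi_nonneg _) _)
    (pow_nonneg (by linarith [Phi_le_one ((c0 - Real.sqrt ρ0 * v) / Real.sqrt (1 - ρ0))]) _))
    (gaussianPDFReal_nonneg 0 1 v)
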